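/- Let A ∈ ℂ^{N×N}, B ∈ ℂ^{N×p}, and let W ∈ ℂ^{N×r} satisfy WᴴW = I_r and Wᴴ A = Ã Wᴴ with Ã = Wᴴ A W. Assume the characteristic polynomial of A factors as charpoly(A) = charpoly(Ã) · q, where every complex root of q has modulus strictly less than 1. Let K ∈ ℂ^{p×r} be such that every eigenvalue of Ã + Wᴴ B K has modulus strictly less than 1. Then every eigenvalue of A + B K Wᴴ has modulus strictly less than 1. -/

import Mathlib

open Matrix

set_option maxHeartbeats 1000000 in
open Polynomial in
lemma charpoly_lift_mul
    {N p r : ℕ} (A : Matrix (Fin N) (Fin N) ℂ) (B : Matrix (Fin N) (Fin p) ℂ)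
    (Wh : Matrix (Fin r) (Fin N) ℂ) (Atil : Matrix (Fin r) (Fin r) ℂ)
    (hinv : Wh * A = Atil * Wh) (K : Matrix (Fin p) (Fin r) ℂ) :
    (A + B * K * Wh).charpoly * Atil.charpoly
      = A.charpoly * (Atil + Wh * B * K).charpoly := by
  set F := FractionRing (Polynomial ℂ)
  set φ : Polynomial ℂ →+* F := algebraMap (Polynomial ℂ) F with hφ
  have hinj : Function.Injective φ := IsFractionRing.injective (Polynomial ℂ) F
  apply hinj
  set ψ : ℂ →+* F := φ.comp Polynomial.C with hψ
  set x : F := φ Polynomial.X with hx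
  -- mapping the charmatrix
  have hmap : ∀ {m : ℕ} (M : Matrix (Fin m) (Fin m) ℂ),
      (charmatrix M).map φ = x • (1 : Matrix (Fin m) (Fin m) F) - M.map ψ := by
    intro m M
    ext i j
    by_cases h : i = j <;>
      simp [charmatrix, h, Matrix.map_apply, Matrix.one_apply, Matrix.smul_apply, hψ, hx]
  have hcp : ∀ {m : ℕ} (M : Matrix (Fin m) (Fin m) ℂ),
      φ M.charpoly = (x • (1 : Matrix (Fin m) (Fin m) F) - M.map ψ).det := by
    intro m M
    rw [Matrix.charpoly, RingHom.map_det, RingHom.mapMatrix_apply, hmap]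
  set S : Matrix (Fin N) (Fin N) F := x • 1 - A.map ψ with hS
  set Sr : Matrix (Fin r) (Fin r) F := x • 1 - Atil.map ψ with hSr
  set Bf := B.map ψ
  set Kf := K.map ψ
  set Vf := Wh.map ψ
  have hdetS : S.det = φ A.charpoly := (hcp A).symm
  have hdetSr : Sr.det = φ Atil.charpoly := (hcp Atil).symm
  have hSu : IsUnit S.det := by
    rw [hdetS, isUnit_iff_ne_zero]
    intro h
    exact A.charpoly_monic.ne_zero (hinj (h.trans (map_zero φ).symm))
  have hSru : IsUnit Sr.det := by
    rw [hdetSr, isUnit_iff_ne_zero]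
    intro h
    exact Atil.charpoly_monic.ne_zero (hinj (h.trans (map_zero φ).symm))
  have hcomm : Vf * S = Sr * Vf := by
    have : Vf * A.map ψ = Atil.map ψ * Vf := by
      rw [← Matrix.map_mul, ← Matrix.map_mul, hinv]
    simp only [hS, hSr, Matrix.mul_sub, Matrix.sub_mul, Matrix.mul_smul, Matrix.smul_mul,
      Matrix.mul_one, Matrix.one_mul, this]
  have h1 : Vf * S⁻¹ = Sr⁻¹ * Vf := by
    calc Vf * S⁻¹ = Sr⁻¹ * (Sr * Vf) * S⁻¹ := by
          rw [← Matrix.mul_assoc, Matrix.nonsing_inv_mul _ hSru, Matrix.one_mul]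
      _ = Sr⁻¹ * (Vf * S) * S⁻¹ := by rw [hcomm]
      _ = Sr⁻¹ * Vf * (S * S⁻¹) := by rw [Matrix.mul_assoc, Matrix.mul_assoc, Matrix.mul_assoc]
      _ = Sr⁻¹ * Vf := by rw [Matrix.mul_nonsing_inv _ hSu, Matrix.mul_one]
  -- rewrite both sides
  rw [_root_.map_mul, _root_.map_mul, hcp, hcp, hcp, hcp]
  have hlhsM : x • (1 : Matrix (Fin N) (Fin N) F) - (A + B * K * Wh).map ψ
      = S - Bf * Kf * Vf := by
    have h2 : (A + B * K * Wh).map (⇑ψ) = A.map ψ + Bf * Kf * Vf := by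
      rw [Matrix.map_add _ (fun a b => map_add ψ a b), Matrix.map_mul, Matrix.map_mul]
    rw [h2, hS, sub_add_eq_sub_sub]
  have hrhsM : x • (1 : Matrix (Fin r) (Fin r) F) - (Atil + Wh * B * K).map ψ
      = Sr - Vf * Bf * Kf := by
    have h2 : (Atil + Wh * B * K).map (⇑ψ) = Atil.map ψ + Vf * Bf * Kf := by
      rw [Matrix.map_add _ (fun a b => map_add ψ a b), Matrix.map_mul, Matrix.map_mul]
    rw [h2, hSr, sub_add_eq_sub_sub]
  rw [hlhsM, hrhsM]
  have key1 : S - Bf * Kf * Vf = S * (1 - S⁻¹ * (Bf * Kf * Vf)) := by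
    rw [Matrix.mul_sub, Matrix.mul_one, ← Matrix.mul_assoc S,
      Matrix.mul_nonsing_inv _ hSu, Matrix.one_mul]
  have key2 : Sr - Vf * (Bf * Kf) = Sr * (1 - Sr⁻¹ * (Vf * (Bf * Kf))) := by
    rw [Matrix.mul_sub, Matrix.mul_one, ← Matrix.mul_assoc Sr,
      Matrix.mul_nonsing_inv _ hSru, Matrix.one_mul]
  have hmid : (1 - S⁻¹ * (Bf * Kf * Vf)).det = (1 - Sr⁻¹ * (Vf * (Bf * Kf))).det := by
    have : S⁻¹ * (Bf * Kf * Vf) = (S⁻¹ * (Bf * Kf)) * Vf :=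
      (Matrix.mul_assoc _ _ _).symm
    rw [this, Matrix.det_one_sub_mul_comm]
    congr 1
    congr 1
    calc Vf * (S⁻¹ * (Bf * Kf)) = (Vf * S⁻¹) * (Bf * Kf) := by rw [Matrix.mul_assoc]
      _ = Sr⁻¹ * Vf * (Bf * Kf) := by rw [h1]
      _ = Sr⁻¹ * (Vf * (Bf * Kf)) := by rw [Matrix.mul_assoc]
  calc (S - Bf * Kf * Vf).det * Sr.det
      = S.det * ((1 - S⁻¹ * (Bf * Kf * Vf)).det * Sr.det) := by
        rw [key1, Matrix.det_mul]; ring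
    _ = S.det * (Sr * (1 - Sr⁻¹ * (Vf * (Bf * Kf)))).det := by
        rw [hmid, Matrix.det_mul]; ring
    _ = S.det * (Sr - Vf * Bf * Kf).det := by
        rw [← key2, Matrix.mul_assoc]


/-- Linear-systems core of the paper's Theorem 1: a feedback `K` Schur-stabilizing the
latent model `(Ã, WᴴB)` on the left eigenspace of the unstable eigenvalues of `A`,
lifted as `K Wᴴ`, Schur-stabilizes the full linear system. -/
theorem stmt_1
    {N p r : ℕ}
    (A : Matrix (Fin N) (Fin N) ℂ) (B : Matrix (Fin N) (Fin p) ℂ)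
    (W : Matrix (Fin N) (Fin r) ℂ)
    (hW : Wᴴ * W = 1)
    (Atil : Matrix (Fin r) (Fin r) ℂ)
    (hAtil : Atil = Wᴴ * A * W)
    (hinv : Wᴴ * A = Atil * Wᴴ)
    (q : Polynomial ℂ)
    (hfac : A.charpoly = Atil.charpoly * q)
    (hq : ∀ z : ℂ, q.IsRoot z → ‖z‖ < 1)
    (K : Matrix (Fin p) (Fin r) ℂ)
    (hK : ∀ z : ℂ, (Atil + Wᴴ * B * K).charpoly.IsRoot z → ‖z‖ < 1) :
    ∀ z : ℂ, (A + B * K * Wᴴ).charpoly.IsRoot z → ‖z‖ < 1 := by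
  have hkey := charpoly_lift_mul A B Wᴴ Atil hinv K
  rw [hfac] at hkey
  have hne : Atil.charpoly ≠ 0 := Atil.charpoly_monic.ne_zero
  have hcl : (A + B * K * Wᴴ).charpoly = q * (Atil + Wᴴ * B * K).charpoly :=
    mul_right_cancel₀ hne (by linear_combination hkey)
  intro z hz
  rw [hcl] at hz
  rcases (by simpa [Polynomial.IsRoot] using hz : _ ∨ _) with h | h
  · exact hq z h
  · exact hK z h
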